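/- arXiv:math/0211361 — 2 statements merged into one kernel-verified Lean document; each statement's English description precedes it below -/
import Mathlib

section
/- There exist constants a_{n,m} and b_{n,m} such that for all nonzero ξ, η ∈ V*, the trace of σ(ξ)σ(η) on Λᵐ V* equals a_{n,m}·⟨ξ,η⟩²/(|ξ|²|η|²) + b_{n,m}, where σ(ξ) = |ξ|^{−2}(ε(ξ)ι(ξ) − ι(ξ)ε(ξ)); moreover b_{n,m} = C(n−2,m−2) + C(n−2,m) − 2·C(n−2,m−1) and a_{n,m} = C(n,m) − b_{n,m}. -/
noncomputable section

open ExteriorAlgebra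
open scoped RealInnerProductSpace

abbrev Vn (n : ℕ) := EuclideanSpace ℝ (Fin n)

variable {n : ℕ}

def eps (ξ : Vn n) : ExteriorAlgebra ℝ (Vn n) →ₗ[ℝ] ExteriorAlgebra ℝ (Vn n) :=
  LinearMap.mulLeft ℝ (ExteriorAlgebra.ι ℝ ξ)

def iot (ξ : Vn n) : ExteriorAlgebra ℝ (Vn n) →ₗ[ℝ] ExteriorAlgebra ℝ (Vn n) :=
  CliffordAlgebra.contractLeft (Q := (0 : QuadraticForm ℝ (Vn n)))
    (innerSL ℝ ξ).toLinearMap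

lemma eps_mem (ξ : Vn n) (m : ℕ) :
    ∀ x ∈ ⋀[ℝ]^m (Vn n), eps ξ x ∈ ⋀[ℝ]^(m+1) (Vn n) := by
  intro x hx
  rw [exteriorPower, pow_succ']
  exact Submodule.mul_mem_mul ⟨ξ, rfl⟩ hx

lemma iot_zero_mem (ξ : Vn n) :
    ∀ x ∈ ⋀[ℝ]^0 (Vn n), iot ξ x = 0 := by
  intro x hx
  rw [exteriorPower, pow_zero, Submodule.one_eq_range] at hx
  obtain ⟨r, rfl⟩ := hx
  exact CliffordAlgebra.contractLeft_algebraMap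
    (Q := (0 : QuadraticForm ℝ (Vn n))) (innerSL ℝ ξ).toLinearMap r

lemma iot_mem (ξ : Vn n) (m : ℕ) :
    ∀ x ∈ ⋀[ℝ]^(m+1) (Vn n), iot ξ x ∈ ⋀[ℝ]^m (Vn n) := by
  induction m with
  | zero =>
    intro x hx
    rw [exteriorPower, pow_one] at hx
    obtain ⟨v, rfl⟩ := hx
    rw [iot, CliffordAlgebra.contractLeft_ι]
    exact Submodule.algebraMap_mem _
  | succ k ih =>
    intro x hx
    rw [exteriorPower, pow_succ'] at hx
    refine Submodule.mul_induction_on hx ?_ ?_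
    · rintro a ⟨v, rfl⟩ b hb
      rw [iot, CliffordAlgebra.contractLeft_ι_mul]
      refine sub_mem (Submodule.smul_mem _ _ hb) ?_
      rw [exteriorPower, pow_succ']
      exact Submodule.mul_mem_mul ⟨v, rfl⟩ (ih b hb)
    · intro x y hx hy
      rw [map_add]
      exact add_mem hx hy

/-- `S(ξ) = ε(ξ)ι(ξ) − ι(ξ)ε(ξ)`. -/
def SOp (ξ : Vn n) : ExteriorAlgebra ℝ (Vn n) →ₗ[ℝ] ExteriorAlgebra ℝ (Vn n) :=
  eps ξ ∘ₗ iot ξ - iot ξ ∘ₗ eps ξ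

lemma SOp_mem (ξ : Vn n) (m : ℕ) :
    ∀ x ∈ ⋀[ℝ]^m (Vn n), SOp ξ x ∈ ⋀[ℝ]^m (Vn n) := by
  intro x hx
  have h2 : iot ξ (eps ξ x) ∈ ⋀[ℝ]^m (Vn n) := iot_mem ξ m _ (eps_mem ξ m x hx)
  have h1 : eps ξ (iot ξ x) ∈ ⋀[ℝ]^m (Vn n) := by
    match m with
    | 0 => rw [iot_zero_mem ξ x hx, map_zero]; exact Submodule.zero_mem _
    | k+1 => exact eps_mem ξ k _ (iot_mem ξ k x hx)
  simpa [SOp, LinearMap.sub_apply, LinearMap.comp_apply] using sub_mem h1 h2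

/-- `S(ξ)` restricted to `m`-forms. -/
def SRes (ξ : Vn n) (m : ℕ) : ⋀[ℝ]^m (Vn n) →ₗ[ℝ] ⋀[ℝ]^m (Vn n) :=
  (SOp ξ).restrict (SOp_mem ξ m)

/-- The leading symbol `σ(ξ) = |ξ|⁻²(ε(ξ)ι(ξ) − ι(ξ)ε(ξ))`. -/
def sigmaOp (ξ : Vn n) : ExteriorAlgebra ℝ (Vn n) →ₗ[ℝ] ExteriorAlgebra ℝ (Vn n) :=
  (‖ξ‖ ^ 2)⁻¹ • SOp ξ

lemma sigmaOp_mem (ξ : Vn n) (m : ℕ) :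
    ∀ x ∈ ⋀[ℝ]^m (Vn n), sigmaOp ξ x ∈ ⋀[ℝ]^m (Vn n) := by
  intro x hx
  simpa [sigmaOp] using Submodule.smul_mem _ _ (SOp_mem ξ m x hx)

/-- `σ(ξ)` restricted to `m`-forms. -/
def sigmaR (ξ : Vn n) (m : ℕ) : ⋀[ℝ]^m (Vn n) →ₗ[ℝ] ⋀[ℝ]^m (Vn n) :=
  (sigmaOp ξ).restrict (sigmaOp_mem ξ m)

/-- `ε(ξ₁)ι(ξ₂)ε(η₁)ι(η₂)`. -/
def quad (ξ₁ ξ₂ η₁ η₂ : Vn n) : ExteriorAlgebra ℝ (Vn n) →ₗ[ℝ] ExteriorAlgebra ℝ (Vn n) :=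
  eps ξ₁ ∘ₗ iot ξ₂ ∘ₗ eps η₁ ∘ₗ iot η₂

lemma quad_mem (ξ₁ ξ₂ η₁ η₂ : Vn n) (m : ℕ) :
    ∀ x ∈ ⋀[ℝ]^m (Vn n), quad ξ₁ ξ₂ η₁ η₂ x ∈ ⋀[ℝ]^m (Vn n) := by
  intro x hx
  have hq : quad ξ₁ ξ₂ η₁ η₂ x = eps ξ₁ (iot ξ₂ (eps η₁ (iot η₂ x))) := rfl
  match m with
  | 0 =>
    rw [hq, iot_zero_mem η₂ x hx]
    simp only [map_zero]
    exact Submodule.zero_mem _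
  | k+1 =>
    rw [hq]
    exact eps_mem _ k _ (iot_mem _ k _ (eps_mem _ k _ (iot_mem _ k x hx)))

/-- `ε(ξ₁)ι(ξ₂)ε(η₁)ι(η₂)` restricted to `m`-forms. -/
def quadR (ξ₁ ξ₂ η₁ η₂ : Vn n) (m : ℕ) : ⋀[ℝ]^m (Vn n) →ₗ[ℝ] ⋀[ℝ]^m (Vn n) :=
  (quad ξ₁ ξ₂ η₁ η₂).restrict (quad_mem ξ₁ ξ₂ η₁ η₂ m)


/-- The constant `b_{n,m} = C(n−2,m−2) + C(n−2,m) − 2 C(n−2,m−1)` (with the convention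
`C(n,k) = 0` for `k < 0`). -/
noncomputable def bConst (n m : ℕ) : ℝ :=
  (if 2 ≤ m then ((n - 2).choose (m - 2) : ℝ) else 0) + ((n - 2).choose m : ℝ)
    - 2 * (if 1 ≤ m then ((n - 2).choose (m - 1) : ℝ) else 0)

-- ===== auxiliary development =====

instance instFiniteExtPow (m : ℕ) : Module.Finite ℝ (⋀[ℝ]^m (Vn n)) := by
  apply Module.Finite.iff_fg.mpr
  apply Submodule.FG.pow
  rw [LinearMap.range_eq_map]
  exact Submodule.FG.map _ Module.Finite.fg_top

lemma iot_eps (ξ η : Vn n) (x : ExteriorAlgebra ℝ (Vn n)) :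
    iot η (eps ξ x) = ⟪η, ξ⟫ • x - eps ξ (iot η x) := by
  have h := CliffordAlgebra.contractLeft_ι_mul (Q := (0 : QuadraticForm ℝ (Vn n)))
    (d := (innerSL ℝ η).toLinearMap) ξ x
  simpa [eps, iot, LinearMap.mulLeft_apply] using h

lemma iot_iot (ξ η : Vn n) (x : ExteriorAlgebra ℝ (Vn n)) :
    iot ξ (iot η x) = - iot η (iot ξ x) :=
  CliffordAlgebra.contractLeft_comm _ _ x

/-- `ε(ξ)` as a map `Λᵐ → Λ^{m+1}`. -/
def epsR (ξ : Vn n) (m : ℕ) : ⋀[ℝ]^m (Vn n) →ₗ[ℝ] ⋀[ℝ]^(m+1) (Vn n) :=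
  (eps ξ).restrict (eps_mem ξ m)

/-- `ι(ξ)` as a map `Λ^{m+1} → Λᵐ`. -/
def iotR (ξ : Vn n) (m : ℕ) : ⋀[ℝ]^(m+1) (Vn n) →ₗ[ℝ] ⋀[ℝ]^m (Vn n) :=
  (iot ξ).restrict (iot_mem ξ m)

@[simp] lemma epsR_coe (ξ : Vn n) (m : ℕ) (x : ⋀[ℝ]^m (Vn n)) :
    (epsR ξ m x : ExteriorAlgebra ℝ (Vn n)) = eps ξ x := rfl

@[simp] lemma iotR_coe (ξ : Vn n) (m : ℕ) (x : ⋀[ℝ]^(m+1) (Vn n)) :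
    (iotR ξ m x : ExteriorAlgebra ℝ (Vn n)) = iot ξ x := rfl

/-- `ε(ξ)ι(η)` on `Λᵐ` (zero for `m = 0`). -/
def EIop (ξ η : Vn n) : (m : ℕ) → (⋀[ℝ]^m (Vn n) →ₗ[ℝ] ⋀[ℝ]^m (Vn n))
  | 0 => 0
  | (k+1) => epsR ξ k ∘ₗ iotR η k

lemma iotR_comp_epsR (ξ η : Vn n) (m : ℕ) :
    iotR η m ∘ₗ epsR ξ m = (⟪η, ξ⟫ : ℝ) • LinearMap.id - EIop ξ η m := by
  refine LinearMap.ext fun x => Subtype.ext ?_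
  cases m with
  | zero =>
      have h0 : iot η (x : ExteriorAlgebra ℝ (Vn n)) = 0 := iot_zero_mem η x x.2
      simp [EIop, iot_eps, h0]
  | succ k =>
      simp [EIop, iot_eps]

lemma iotR_comp_iotR (ξ η : Vn n) (m : ℕ) :
    iotR ξ m ∘ₗ iotR η (m+1) = - (iotR η m ∘ₗ iotR ξ (m+1)) := by
  refine LinearMap.ext fun x => Subtype.ext ?_
  simpa using iot_iot ξ η (x : ExteriorAlgebra ℝ (Vn n))

/-- The dimension of `Λᵐ` as a real number. -/
def dR (n m : ℕ) : ℝ := (Module.finrank ℝ (⋀[ℝ]^m (Vn n)) : ℝ)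

/-- Recursively defined coefficient: the trace of `ε(ξ)ι(η)` on `Λᵐ` is `⟪η,ξ⟫ * aC n m`. -/
def aC (n : ℕ) : ℕ → ℝ
  | 0 => 0
  | (m+1) => dR n m - aC n m

/-- Recursively defined coefficient for the quartic trace. -/
def cC (n : ℕ) : ℕ → ℝ
  | 0 => 0
  | (m+1) => aC n m - cC n m

instance instFreeExtPow (m : ℕ) : Module.Free ℝ (⋀[ℝ]^m (Vn n)) :=
  Module.Free.of_divisionRing ℝ _

lemma trace_sub {M : Type*} [AddCommGroup M] [Module ℝ M] (f g : M →ₗ[ℝ] M) :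
    LinearMap.trace ℝ M (f - g) = LinearMap.trace ℝ M f - LinearMap.trace ℝ M g :=
  map_sub _ f g

lemma trace_add {M : Type*} [AddCommGroup M] [Module ℝ M] (f g : M →ₗ[ℝ] M) :
    LinearMap.trace ℝ M (f + g) = LinearMap.trace ℝ M f + LinearMap.trace ℝ M g :=
  map_add _ f g

lemma trace_smul {M : Type*} [AddCommGroup M] [Module ℝ M] (c : ℝ) (f : M →ₗ[ℝ] M) :
    LinearMap.trace ℝ M (c • f) = c * LinearMap.trace ℝ M f :=
  map_smul _ c f

lemma trace_neg {M : Type*} [AddCommGroup M] [Module ℝ M] (f : M →ₗ[ℝ] M) :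
    LinearMap.trace ℝ M (-f) = - LinearMap.trace ℝ M f :=
  map_neg _ f

lemma trace_EIop (ξ η : Vn n) (m : ℕ) :
    LinearMap.trace ℝ (⋀[ℝ]^m (Vn n)) (EIop ξ η m) = ⟪η, ξ⟫ * aC n m := by
  induction m with
  | zero => simp [EIop, aC]
  | succ k ih =>
      have h1 : LinearMap.trace ℝ (⋀[ℝ]^(k+1) (Vn n)) (EIop ξ η (k+1))
          = LinearMap.trace ℝ (⋀[ℝ]^k (Vn n)) (iotR η k ∘ₗ epsR ξ k) := by
        rw [show EIop ξ η (k+1) = epsR ξ k ∘ₗ iotR η k from rfl]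
        exact (LinearMap.trace_comp_comm' _ _).symm
      rw [h1, iotR_comp_epsR, trace_sub, trace_smul, LinearMap.trace_id, ih]
      rw [aC, dR]
      ring

lemma eps_eps (ξ η : Vn n) (x : ExteriorAlgebra ℝ (Vn n)) :
    eps ξ (eps η x) = - eps η (eps ξ x) := by
  have h : ExteriorAlgebra.ι ℝ ξ * ExteriorAlgebra.ι ℝ η
      = - (ExteriorAlgebra.ι ℝ η * ExteriorAlgebra.ι ℝ ξ) :=
    eq_neg_of_add_eq_zero_left (ExteriorAlgebra.ι_add_mul_swap ξ η)
  simp only [eps, LinearMap.mulLeft_apply, ← mul_assoc, h, neg_mul]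

/-- The standard orthonormal basis of `Vn n`. -/
def stdB (n : ℕ) : OrthonormalBasis (Fin n) ℝ (Vn n) := EuclideanSpace.basisFun (Fin n) ℝ

lemma number_op (m : ℕ) :
    ∀ x ∈ ⋀[ℝ]^m (Vn n),
      ∑ i : Fin n, eps (stdB n i) (iot (stdB n i) x) = (m : ℝ) • x := by
  induction m with
  | zero =>
      intro x hx
      rw [exteriorPower, pow_zero, Submodule.one_eq_range] at hx
      obtain ⟨r, rfl⟩ := hx
      have h0 : ∀ i : Fin n, iot (stdB n i) ((algebraMap ℝ (ExteriorAlgebra ℝ (Vn n))) r) = 0 :=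
        fun i => CliffordAlgebra.contractLeft_algebraMap
          (Q := (0 : QuadraticForm ℝ (Vn n))) (innerSL ℝ (stdB n i)).toLinearMap r
      simp [Algebra.linearMap_apply, h0]
  | succ k ih =>
      intro x hx
      rw [exteriorPower, pow_succ'] at hx
      refine Submodule.mul_induction_on hx ?_ ?_
      · rintro a ⟨v, rfl⟩ b hb
        have hvb : (ExteriorAlgebra.ι ℝ) v * b = eps v b := rfl
        rw [hvb]
        have key : ∀ i : Fin n, eps (stdB n i) (iot (stdB n i) (eps v b))
            = ⟪stdB n i, v⟫ • eps (stdB n i) b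
              + eps v (eps (stdB n i) (iot (stdB n i) b)) := by
          intro i
          rw [iot_eps, map_sub, map_smul, eps_eps]
          abel
        rw [Finset.sum_congr rfl (fun i _ => key i), Finset.sum_add_distrib]
        have h1 : ∑ i : Fin n, ⟪stdB n i, v⟫ • eps (stdB n i) b = eps v b := by
          have : ∀ i : Fin n, ⟪stdB n i, v⟫ • eps (stdB n i) b
              = eps (⟪stdB n i, v⟫ • stdB n i) b := by
            intro i
            simp [eps, LinearMap.mulLeft_apply, map_smul, smul_mul_assoc]
          rw [Finset.sum_congr rfl (fun i _ => this i)]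
          have hsum : ∑ i : Fin n, (⟪stdB n i, v⟫ • stdB n i) = v := (stdB n).sum_repr' v
          calc ∑ i : Fin n, eps (⟪stdB n i, v⟫ • stdB n i) b
              = eps (∑ i : Fin n, ⟪stdB n i, v⟫ • stdB n i) b := by
                simp only [eps, LinearMap.mulLeft_apply, map_sum, Finset.sum_mul]
            _ = eps v b := by rw [hsum]
        have h2 : ∑ i : Fin n, eps v (eps (stdB n i) (iot (stdB n i) b))
            = (k : ℝ) • eps v b := by
          rw [← map_sum, ih b hb, map_smul]
        rw [h1, h2]
        push_cast
        rw [add_smul, one_smul, add_comm]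
      · intro a b ha hb
        simp only [map_add, Finset.sum_add_distrib, ha, hb, smul_add]

lemma sum_EIop_eq (m : ℕ) :
    ∑ i : Fin n, EIop (stdB n i) (stdB n i) m
      = (m : ℝ) • (LinearMap.id : ⋀[ℝ]^m (Vn n) →ₗ[ℝ] ⋀[ℝ]^m (Vn n)) := by
  refine LinearMap.ext fun x => Subtype.ext ?_
  have hno := number_op (n := n) m x x.2
  cases m with
  | zero =>
      simp [EIop]
  | succ k =>
      simp only [LinearMap.coe_sum, Finset.sum_apply, LinearMap.smul_apply,
        LinearMap.id_coe, id_eq, AddSubmonoidClass.coe_finset_sum, SetLike.val_smul]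
      rw [← hno]
      refine Finset.sum_congr rfl fun i _ => ?_
      simp [EIop]

lemma inner_stdB_self (i : Fin n) : (⟪stdB n i, stdB n i⟫ : ℝ) = 1 := by
  rw [real_inner_self_eq_norm_sq, (stdB n).orthonormal.1 i]
  norm_num

lemma dim_rel (m : ℕ) : (m : ℝ) * dR n m = (n : ℝ) * aC n m := by
  have h := congrArg (LinearMap.trace ℝ (⋀[ℝ]^m (Vn n))) (sum_EIop_eq (n := n) m)
  rw [map_sum, trace_smul, LinearMap.trace_id] at h
  have h2 : ∀ i : Fin n, LinearMap.trace ℝ (⋀[ℝ]^m (Vn n)) (EIop (stdB n i) (stdB n i) m)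
      = aC n m := by
    intro i
    rw [trace_EIop, inner_stdB_self, one_mul]
  rw [Finset.sum_congr rfl (fun i _ => h2 i), Finset.sum_const, Finset.card_univ] at h
  simpa [dR, mul_comm, nsmul_eq_mul] using h.symm

lemma dR_zero : dR n 0 = 1 := by
  have h : ⋀[ℝ]^0 (Vn n) = LinearMap.range (Algebra.linearMap ℝ (ExteriorAlgebra ℝ (Vn n))) := by
    rw [exteriorPower, pow_zero, Submodule.one_eq_range]
  rw [dR, h, LinearMap.finrank_range_of_inj]
  · simp
  · exact ExteriorAlgebra.algebraMap_leftInverse (Vn n) |>.injective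

lemma dR_aC_val (p : ℕ) : ∀ m : ℕ, dR (p+2) m = ((p+2).choose m : ℝ)
    ∧ aC (p+2) (m+1) = ((p+1).choose m : ℝ) := by
  intro m
  induction m with
  | zero =>
      refine ⟨by simpa using dR_zero (n := p+2), ?_⟩
      show dR (p+2) 0 - aC (p+2) 0 = _
      rw [dR_zero]
      simp [aC]
  | succ k ih =>
      have hd : dR (p+2) (k+1) = ((p+2).choose (k+1) : ℝ) := by
        have h1 := dim_rel (n := p+2) (k+1)
        rw [ih.2] at h1
        have h2 : ((p+2 : ℕ) : ℝ) * ((p+1).choose k : ℝ)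
            = ((k+1 : ℕ) : ℝ) * ((p+2).choose (k+1) : ℝ) := by
          have := Nat.add_one_mul_choose_eq (p+1) k
          have hcast := congrArg (fun t : ℕ => (t : ℝ)) this
          push_cast at hcast ⊢
          linarith
        have hk : ((k+1 : ℕ) : ℝ) ≠ 0 := by positivity
        have : ((k+1 : ℕ) : ℝ) * dR (p+2) (k+1) = ((k+1 : ℕ) : ℝ) * ((p+2).choose (k+1) : ℝ) := by
          rw [h1, h2]
        exact mul_left_cancel₀ hk this
      refine ⟨hd, ?_⟩
      show dR (p+2) (k+1) - aC (p+2) (k+1) = _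
      rw [hd, ih.2]
      have := Nat.choose_succ_succ (p+1) k
      have hcast := congrArg (fun t : ℕ => (t : ℝ)) this
      push_cast at hcast ⊢
      linarith

lemma dR_val (p m : ℕ) : dR (p+2) m = ((p+2).choose m : ℝ) := (dR_aC_val p m).1

lemma aC_val (p m : ℕ) : aC (p+2) (m+1) = ((p+1).choose m : ℝ) := (dR_aC_val p m).2

lemma aC_zero (q : ℕ) : aC q 0 = 0 := rfl

lemma cC_zero (q : ℕ) : cC q 0 = 0 := rfl

lemma cC_one (q : ℕ) : cC q 1 = 0 := by
  show aC q 0 - cC q 0 = 0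
  simp [aC_zero, cC_zero]

lemma cC_val (p : ℕ) : ∀ m : ℕ, cC (p+2) (m+2) = (p.choose m : ℝ) := by
  intro m
  induction m with
  | zero =>
      show aC (p+2) 1 - cC (p+2) 1 = _
      rw [aC_val, cC_one]
      simp
  | succ k ih =>
      show aC (p+2) (k+2) - cC (p+2) (k+2) = _
      rw [aC_val, ih]
      have := Nat.choose_succ_succ p k
      have hcast := congrArg (fun t : ℕ => (t : ℝ)) this
      push_cast at hcast ⊢
      linarith

@[simp] lemma EIop_zero (ξ η : Vn n) : EIop ξ η 0 = 0 := rfl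

@[simp] lemma EIop_succ (ξ η : Vn n) (k : ℕ) : EIop ξ η (k+1) = epsR ξ k ∘ₗ iotR η k := rfl

/-- `ε(ξ)ε(η)ι(ξ)ι(η)` on `Λᵐ` (zero for `m ≤ 1`). -/
def EEII (ξ η : Vn n) : (m : ℕ) → (⋀[ℝ]^m (Vn n) →ₗ[ℝ] ⋀[ℝ]^m (Vn n))
  | 0 => 0
  | 1 => 0
  | (j+2) => epsR ξ (j+1) ∘ₗ epsR η j ∘ₗ iotR ξ j ∘ₗ iotR η (j+1)

@[simp] lemma EEII_zero (ξ η : Vn n) : EEII ξ η 0 = 0 := rfl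
@[simp] lemma EEII_one (ξ η : Vn n) : EEII ξ η 1 = 0 := rfl
@[simp] lemma EEII_succ_succ (ξ η : Vn n) (j : ℕ) :
    EEII ξ η (j+2) = epsR ξ (j+1) ∘ₗ epsR η j ∘ₗ iotR ξ j ∘ₗ iotR η (j+1) := rfl

set_option maxHeartbeats 2000000 in
lemma trace_EEII (ξ η : Vn n) (m : ℕ) :
    LinearMap.trace ℝ (⋀[ℝ]^m (Vn n)) (EEII ξ η m)
      = ((⟪ξ, η⟫ : ℝ)^2 - ‖ξ‖^2 * ‖η‖^2) * cC n m := by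
  induction m generalizing ξ η with
  | zero => simp [cC_zero]
  | succ j ihj =>
      match j with
      | 0 => simp [cC_one]
      | (j+1) =>
        have step1 : LinearMap.trace ℝ (⋀[ℝ]^(j+2) (Vn n)) (EEII ξ η (j+2))
            = LinearMap.trace ℝ (⋀[ℝ]^(j+1) (Vn n))
              ((epsR η j ∘ₗ iotR ξ j ∘ₗ iotR η (j+1)) ∘ₗ epsR ξ (j+1)) := by
          rw [EEII_succ_succ]
          exact (LinearMap.trace_comp_comm' _ _).symm
        rw [step1]
        match j with
        | 0 =>
            have key : (epsR η 0 ∘ₗ iotR ξ 0 ∘ₗ iotR η 1) ∘ₗ epsR ξ 1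
                = (⟪η, ξ⟫ : ℝ) • EIop η ξ 1 - (⟪ξ, ξ⟫ : ℝ) • EIop η η 1 := by
              refine LinearMap.ext fun x => Subtype.ext ?_
              simp only [LinearMap.comp_apply, LinearMap.sub_apply, LinearMap.smul_apply,
                EIop_succ, epsR_coe, iotR_coe, AddSubgroupClass.coe_sub, SetLike.val_smul]
              rw [iot_eps, map_sub, map_smul, iot_eps]
              have hz : iot ξ (iot η (x : ExteriorAlgebra ℝ (Vn n))) = 0 := by
                have hmem : iot η (x : ExteriorAlgebra ℝ (Vn n)) ∈ ⋀[ℝ]^0 (Vn n) :=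
                  iot_mem η 0 _ x.2
                exact iot_zero_mem ξ _ hmem
              rw [hz]
              simp only [map_sub, map_smul, map_zero, sub_zero]
            rw [key, trace_sub, trace_smul, trace_smul, trace_EIop, trace_EIop]
            have h1 : (⟪ξ, ξ⟫ : ℝ) = ‖ξ‖^2 := real_inner_self_eq_norm_sq ξ
            have h2 : (⟪η, η⟫ : ℝ) = ‖η‖^2 := real_inner_self_eq_norm_sq η
            have h3 : (⟪η, ξ⟫ : ℝ) = ⟪ξ, η⟫ := real_inner_comm ξ η
            have h4 : cC n 2 = aC n 1 := by
              show aC n 1 - cC n 1 = aC n 1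
              rw [cC_one]; ring
            rw [h1, h2, h3, h4]
            ring
        | (i+1) =>
            have key : (epsR η (i+1) ∘ₗ iotR ξ (i+1) ∘ₗ iotR η (i+2)) ∘ₗ epsR ξ (i+2)
                = (⟪η, ξ⟫ : ℝ) • EIop η ξ (i+2) - (⟪ξ, ξ⟫ : ℝ) • EIop η η (i+2)
                  - EEII η ξ (i+2) := by
              refine LinearMap.ext fun x => Subtype.ext ?_
              simp only [LinearMap.comp_apply, LinearMap.sub_apply, LinearMap.smul_apply,
                EIop_succ, EEII_succ_succ, epsR_coe, iotR_coe, AddSubgroupClass.coe_sub,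
                SetLike.val_smul]
              rw [iot_eps, map_sub, map_smul, iot_eps, iot_iot]
              simp only [map_sub, map_smul, map_neg, sub_neg_eq_add, map_add]
              abel
            rw [key, trace_sub, trace_sub, trace_smul, trace_smul, trace_EIop, trace_EIop,
              ihj η ξ]
            have h1 : (⟪ξ, ξ⟫ : ℝ) = ‖ξ‖^2 := real_inner_self_eq_norm_sq ξ
            have h2 : (⟪η, η⟫ : ℝ) = ‖η‖^2 := real_inner_self_eq_norm_sq η
            have h3 : (⟪η, ξ⟫ : ℝ) = ⟪ξ, η⟫ := real_inner_comm ξ η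
            have h4 : cC n (i+3) = aC n (i+2) - cC n (i+2) := rfl
            rw [h1, h2, h3, h4]
            ring

lemma trace_EIop_comp (ξ η : Vn n) (m : ℕ) :
    LinearMap.trace ℝ (⋀[ℝ]^m (Vn n)) (EIop ξ ξ m ∘ₗ EIop η η m)
      = (⟪ξ, η⟫ : ℝ)^2 * aC n m - ((⟪ξ, η⟫ : ℝ)^2 - ‖ξ‖^2 * ‖η‖^2) * cC n m := by
  match m with
  | 0 => simp [aC_zero, cC_zero]
  | (k+1) =>
      have key : EIop ξ ξ (k+1) ∘ₗ EIop η η (k+1)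
          = (⟪ξ, η⟫ : ℝ) • EIop ξ η (k+1) - EEII ξ η (k+1) := by
        match k with
        | 0 =>
            refine LinearMap.ext fun x => Subtype.ext ?_
            simp only [EIop_succ, EEII_one, LinearMap.comp_apply, LinearMap.sub_apply,
              LinearMap.smul_apply, LinearMap.zero_apply, epsR_coe, iotR_coe,
              AddSubgroupClass.coe_sub, SetLike.val_smul, ZeroMemClass.coe_zero]
            rw [iot_eps]
            have hz : iot ξ (iot η (x : ExteriorAlgebra ℝ (Vn n))) = 0 :=
              iot_zero_mem ξ _ (iot_mem η 0 _ x.2)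
            rw [hz]
            simp [map_smul]
        | (i+1) =>
            refine LinearMap.ext fun x => Subtype.ext ?_
            simp only [EIop_succ, EEII_succ_succ, LinearMap.comp_apply, LinearMap.sub_apply,
              LinearMap.smul_apply, epsR_coe, iotR_coe, AddSubgroupClass.coe_sub,
              SetLike.val_smul]
            rw [iot_eps]
            simp only [map_sub, map_smul]
      rw [key, trace_sub, trace_smul, trace_EIop, trace_EEII]
      have h3 : (⟪η, ξ⟫ : ℝ) = ⟪ξ, η⟫ := real_inner_comm ξ η
      rw [h3]
      ring

lemma sigmaR_eq (ξ : Vn n) (m : ℕ) :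
    sigmaR ξ m = (‖ξ‖^2)⁻¹ • ((2:ℝ) • EIop ξ ξ m - (‖ξ‖^2 : ℝ) • LinearMap.id) := by
  refine LinearMap.ext fun x => Subtype.ext ?_
  have hcoe : ((sigmaR ξ m x : ⋀[ℝ]^m (Vn n)) : ExteriorAlgebra ℝ (Vn n))
      = sigmaOp ξ (x : ExteriorAlgebra ℝ (Vn n)) := rfl
  rw [hcoe]
  have hS : sigmaOp ξ (x : ExteriorAlgebra ℝ (Vn n))
      = (‖ξ‖^2)⁻¹ • (eps ξ (iot ξ (x : ExteriorAlgebra ℝ (Vn n)))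
        - iot ξ (eps ξ (x : ExteriorAlgebra ℝ (Vn n)))) := rfl
  rw [hS, iot_eps, real_inner_self_eq_norm_sq]
  match m with
  | 0 =>
      have hz : iot ξ (x : ExteriorAlgebra ℝ (Vn n)) = 0 := iot_zero_mem ξ _ x.2
      simp only [EIop_zero, LinearMap.smul_apply, LinearMap.sub_apply, LinearMap.zero_apply,
        LinearMap.id_coe, id_eq, SetLike.val_smul, AddSubgroupClass.coe_sub, smul_zero,
        hz, map_zero, ZeroMemClass.coe_zero, sub_zero]
  | (k+1) =>
      simp only [EIop_succ, LinearMap.smul_apply, LinearMap.sub_apply, LinearMap.comp_apply,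
        LinearMap.id_coe, id_eq, SetLike.val_smul, AddSubgroupClass.coe_sub,
        epsR_coe, iotR_coe]
      module

lemma sigma_comp (ξ η : Vn n) (m : ℕ) :
    sigmaR ξ m ∘ₗ sigmaR η m
      = ((‖ξ‖^2)⁻¹ * (‖η‖^2)⁻¹) • ((4:ℝ) • (EIop ξ ξ m ∘ₗ EIop η η m)
        - (2 * ‖η‖^2) • EIop ξ ξ m - (2 * ‖ξ‖^2) • EIop η η m
        + (‖ξ‖^2 * ‖η‖^2) • LinearMap.id) := by
  rw [sigmaR_eq, sigmaR_eq]
  refine LinearMap.ext fun x => ?_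
  simp only [LinearMap.comp_apply, LinearMap.smul_apply, LinearMap.sub_apply,
    LinearMap.add_apply, LinearMap.id_coe, id_eq, map_sub, map_smul]
  module

set_option maxHeartbeats 2000000 in
/-- `tr(σ(ξ)σ(η)) = a_{n,m} ⟨ξ,η⟩²/(|ξ|²|η|²) + b_{n,m}` on `Λᵐ`, with
`b_{n,m} = C(n−2,m−2) + C(n−2,m) − 2 C(n−2,m−1)` and `a_{n,m} = C(n,m) − b_{n,m}`. -/
theorem statement6 {n : ℕ} (hn : 2 ≤ n) (m : ℕ) (ξ η : Vn n) (hξ : ξ ≠ 0) (hη : η ≠ 0) :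
    LinearMap.trace ℝ (⋀[ℝ]^m (Vn n)) ((sigmaR ξ m) ∘ₗ (sigmaR η m))
      = ((n.choose m : ℝ) - bConst n m) * (⟪ξ, η⟫ ^ 2 / (‖ξ‖ ^ 2 * ‖η‖ ^ 2))
        + bConst n m := by
  obtain ⟨p, rfl⟩ : ∃ p, n = p + 2 := ⟨n - 2, by omega⟩
  have hu : (‖ξ‖ : ℝ)^2 ≠ 0 := pow_ne_zero 2 (norm_ne_zero_iff.mpr hξ)
  have hv : (‖η‖ : ℝ)^2 ≠ 0 := pow_ne_zero 2 (norm_ne_zero_iff.mpr hη)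
  rw [sigma_comp]
  rw [trace_smul, trace_add, trace_sub, trace_sub, trace_smul, trace_smul, trace_smul, trace_smul,
    LinearMap.trace_id, trace_EIop_comp, trace_EIop, trace_EIop]
  have hxx : (⟪ξ, ξ⟫ : ℝ) = ‖ξ‖^2 := real_inner_self_eq_norm_sq ξ
  have hyy : (⟪η, η⟫ : ℝ) = ‖η‖^2 := real_inner_self_eq_norm_sq η
  rw [hxx, hyy]
  have hfr : ((Module.finrank ℝ (⋀[ℝ]^m (Vn (p+2)))) : ℝ) = dR (p+2) m := rfl
  rw [hfr, dR_val]
  match m with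
  | 0 =>
      have hb : bConst (p+2) 0 = 1 := by
        simp [bConst]
      rw [hb, aC_zero, cC_zero]
      simp only [Nat.choose_zero_right, Nat.cast_one]
      field_simp
      ring
  | 1 =>
      have hb : bConst (p+2) 1 = (p : ℝ) - 2 := by
        simp [bConst, Nat.add_sub_cancel]
      have ha1 : aC (p+2) 1 = 1 := by
        have h := aC_val p 0
        simpa using h
      rw [hb, ha1, cC_one]
      simp only [Nat.choose_one_right]
      push_cast
      field_simp
      ring
  | (k+2) =>
      have hb : bConst (p+2) (k+2) = (p.choose k : ℝ) + (p.choose (k+2) : ℝ)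
          - 2 * (p.choose (k+1) : ℝ) := by
        simp [bConst, Nat.add_sub_cancel]
      have ha : aC (p+2) (k+2) = (p.choose k : ℝ) + (p.choose (k+1) : ℝ) := by
        have h1 : aC (p+2) (k+2) = ((p+1).choose (k+1) : ℝ) := aC_val p (k+1)
        have h2 := congrArg (fun t : ℕ => (t : ℝ)) (Nat.choose_succ_succ p k)
        push_cast at h2
        rw [h1, h2]
      have hc : cC (p+2) (k+2) = (p.choose k : ℝ) := cC_val p k
      have hD : ((p+2).choose (k+2) : ℝ) = (p.choose k : ℝ) + 2 * (p.choose (k+1) : ℝ)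
          + (p.choose (k+2) : ℝ) := by
        have h1 := congrArg (fun t : ℕ => (t : ℝ)) (Nat.choose_succ_succ (p+1) (k+1))
        have h2 := congrArg (fun t : ℕ => (t : ℝ)) (Nat.choose_succ_succ p k)
        have h3 := congrArg (fun t : ℕ => (t : ℝ)) (Nat.choose_succ_succ p (k+1))
        push_cast at h1 h2 h3
        linarith
      rw [hb, ha, hc, hD]
      field_simp
      ring
end
end

section
/- The quantities a_m(ξ₁,ξ₂,η₁,η₂) = tr(ε(ξ₁)ι(ξ₂)ε(η₁)ι(η₂)) on Λᵐ V* satisfy the recursion a_{m+1}(η₁,ξ₂,ξ₁,η₂) = a_m(ξ₁,ξ₂,η₁,η₂) + ⟨ξ₁,ξ₂⟩⟨η₁,η₂⟩(2A_{n,m} − C(n,m)), where A_{n,m} = Σ_{j=0}^{m}(−1)^j C(n,m−j). -/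
noncomputable section

open ExteriorAlgebra
open scoped RealInnerProductSpace

variable {n : ℕ}

-- standard basis vector
def sbv (i : Fin n) : Vn n := EuclideanSpace.single i (1 : ℝ)

lemma inner_sbv (i j : Fin n) : ⟪sbv (n := n) i, sbv j⟫ = if i = j then (1:ℝ) else 0 := by
  simp [sbv, EuclideanSpace.inner_single_left, EuclideanSpace.single_apply, eq_comm]

lemma sbv_decomp (v : Vn n) : v = ∑ i, v i • sbv i := by
  ext j
  rw [WithLp.ofLp_sum, Finset.sum_apply]
  simp [sbv, EuclideanSpace.single_apply]

def wl (l : List (Fin n)) : ExteriorAlgebra ℝ (Vn n) :=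
  (l.map (fun i => ExteriorAlgebra.ι ℝ (sbv i))).prod

@[simp] lemma wl_nil : wl (n := n) [] = 1 := rfl

lemma wl_cons (a : Fin n) (l : List (Fin n)) :
    wl (a :: l) = ExteriorAlgebra.ι ℝ (sbv a) * wl l := by
  simp [wl]

lemma wl_append (l₁ l₂ : List (Fin n)) : wl (l₁ ++ l₂) = wl l₁ * wl l₂ := by
  simp [wl]

lemma iot_ι_mul (ξ : Vn n) (v : Vn n) (x : ExteriorAlgebra ℝ (Vn n)) :
    iot ξ (ExteriorAlgebra.ι ℝ v * x) = ⟪ξ, v⟫ • x - ExteriorAlgebra.ι ℝ v * iot ξ x :=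
  CliffordAlgebra.contractLeft_ι_mul _ _ _

lemma iot_wl_of_not_mem {a : Fin n} {l : List (Fin n)} (h : a ∉ l) :
    iot (sbv a) (wl l) = 0 := by
  induction l with
  | nil => simp [iot, wl_nil]
  | cons b t ih =>
    have hab : a ≠ b := fun hh => h (hh ▸ (List.mem_cons_self (a := b) (l := t)))
    have hat : a ∉ t := fun hh => h (List.mem_cons_of_mem _ hh)
    rw [wl_cons, iot_ι_mul, inner_sbv, if_neg hab, ih hat, zero_smul, mul_zero, zero_sub, neg_zero]

lemma ι_mul_wl_comm {a : Fin n} {l : List (Fin n)} (h : a ∉ l) :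
    ExteriorAlgebra.ι ℝ (sbv a) * wl l
      = ((-1 : ℝ) ^ l.length) • (wl l * ExteriorAlgebra.ι ℝ (sbv a)) := by
  induction l with
  | nil => simp
  | cons b t ih =>
    have hab : a ≠ b := fun hh => h (hh ▸ (List.mem_cons_self (a := b) (l := t)))
    have hat : a ∉ t := fun hh => h (List.mem_cons_of_mem _ hh)
    have hswap : ExteriorAlgebra.ι ℝ (sbv a) * ExteriorAlgebra.ι ℝ (sbv b)
        = -(ExteriorAlgebra.ι ℝ (sbv b) * ExteriorAlgebra.ι ℝ (sbv a)) := by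
      have h0 := ExteriorAlgebra.ι_add_mul_swap (R := ℝ) (sbv (n := n) a) (sbv b)
      rw [eq_neg_iff_add_eq_zero]
      exact h0
    rw [wl_cons, ← mul_assoc, hswap, neg_mul, mul_assoc, ih hat, List.length_cons]
    rw [mul_smul_comm, ← mul_assoc]
    rw [pow_succ]
    simp [smul_smul, mul_comm]

lemma iot_wl_mul {a : Fin n} {t : List (Fin n)} (h : a ∉ t) (y : ExteriorAlgebra ℝ (Vn n)) :
    iot (sbv a) (wl t * y) = ((-1 : ℝ) ^ t.length) • (wl t * iot (sbv a) y) := by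
  induction t with
  | nil => simp
  | cons b t' ih =>
    have hab : a ≠ b := fun hh => h (hh ▸ (List.mem_cons_self (a := b) (l := t')))
    have hat : a ∉ t' := fun hh => h (List.mem_cons_of_mem _ hh)
    rw [wl_cons, mul_assoc, iot_ι_mul, inner_sbv, if_neg hab, zero_smul, zero_sub,
      ih hat, List.length_cons, pow_succ]
    rw [mul_smul_comm, ← mul_assoc]
    simp [smul_smul, mul_comm]

/-- Iterated interior multiplication by standard basis vectors, head first. -/
def Dl : List (Fin n) → (ExteriorAlgebra ℝ (Vn n) →ₗ[ℝ] ExteriorAlgebra ℝ (Vn n))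
  | [] => LinearMap.id
  | a :: t => Dl t ∘ₗ iot (sbv a)

@[simp] lemma Dl_nil : Dl (n := n) [] = LinearMap.id := rfl
lemma Dl_cons (a : Fin n) (t : List (Fin n)) (x : ExteriorAlgebra ℝ (Vn n)) :
    Dl (a :: t) x = Dl t (iot (sbv a) x) := rfl

lemma Dl_wl_self {l : List (Fin n)} (h : l.Nodup) : Dl l (wl l) = 1 := by
  induction l with
  | nil => simp
  | cons a t ih =>
    have hat : a ∉ t := (List.nodup_cons.1 h).1
    rw [Dl_cons, wl_cons, iot_ι_mul, inner_sbv, if_pos rfl, one_smul,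
      iot_wl_of_not_mem hat, mul_zero, sub_zero]
    exact ih (List.nodup_cons.1 h).2

lemma Dl_wl_ne {l : List (Fin n)} : ∀ {l' : List (Fin n)}, l.Nodup → l'.Nodup →
    l.length = l'.length → l.toFinset ≠ l'.toFinset → Dl l (wl l') = 0 := by
  induction l with
  | nil =>
    intro l' _ _ hlen hne
    obtain rfl : l' = [] := List.length_eq_zero_iff.1 hlen.symm
    simp at hne
  | cons a t ih =>
    intro l' hl hl' hlen hne
    by_cases ha : a ∈ l'
    · -- split l' at the first occurrence of a
      obtain ⟨p, q, rfl⟩ := List.append_of_mem ha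
      have hnpq : (p ++ q).Nodup := (List.Nodup.sublist (by
        exact List.Sublist.append_left (List.sublist_cons_self a q) p) hl')
      have hap : a ∉ p := by
        intro hp
        have := List.disjoint_of_nodup_append hl'
        exact this hp ((List.mem_cons_self (a := a) (l := q)))
      have haq : a ∉ q := by
        have := (List.nodup_append.1 hl').2.1
        exact (List.nodup_cons.1 this).1
      have hat : a ∉ t := (List.nodup_cons.1 hl).1
      rw [Dl_cons, wl_append, iot_wl_mul hap, wl_cons, iot_ι_mul, inner_sbv, if_pos rfl,
        one_smul, iot_wl_of_not_mem haq, mul_zero, sub_zero, ← wl_append, map_smul]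
      have htP : t.toFinset ≠ (p ++ q).toFinset := by
        intro hEq
        apply hne
        have h1 : (a :: t).toFinset = insert a t.toFinset := by simp
        have h2 : (p ++ a :: q).toFinset = insert a (p ++ q).toFinset := by
          simp [List.toFinset_append, Finset.insert_union, Finset.union_comm,
            Finset.union_insert]
        rw [h1, h2, hEq]
      have hlen' : t.length = (p ++ q).length := by
        have := hlen
        simp only [List.length_cons, List.length_append] at this ⊢
        omega
      rw [ih (List.nodup_cons.1 hl).2 hnpq hlen' htP, smul_zero]
    · rw [Dl_cons, iot_wl_of_not_mem ha, map_zero]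

/-- wedge of the standard basis vectors indexed by a finset, in increasing order -/
def wS (s : Finset (Fin n)) : ExteriorAlgebra ℝ (Vn n) := wl (s.sort (· ≤ ·))

lemma wl_mem_exteriorPower (l : List (Fin n)) : wl l ∈ ⋀[ℝ]^(l.length) (Vn n) := by
  induction l with
  | nil =>
    rw [wl_nil, exteriorPower, List.length_nil, pow_zero]
    exact Submodule.mem_one.2 ⟨1, map_one _⟩
  | cons a t ih =>
    rw [wl_cons, exteriorPower, List.length_cons, pow_succ']
    exact Submodule.mul_mem_mul ⟨sbv a, rfl⟩ ih

lemma wS_mem (s : Finset (Fin n)) : wS s ∈ ⋀[ℝ]^(s.card) (Vn n) := by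
  have := wl_mem_exteriorPower (s.sort (· ≤ ·))
  rwa [Finset.length_sort] at this

lemma Dl_wS_self (s : Finset (Fin n)) : Dl (s.sort (· ≤ ·)) (wS s) = 1 :=
  Dl_wl_self (s.sort_nodup _)

lemma Dl_wS_ne {s t : Finset (Fin n)} (hc : s.card = t.card) (hne : s ≠ t) :
    Dl (s.sort (· ≤ ·)) (wS t) = 0 := by
  refine Dl_wl_ne (s.sort_nodup _) (t.sort_nodup _) ?_ ?_
  · rw [Finset.length_sort, Finset.length_sort, hc]
  · rw [Finset.sort_toFinset, Finset.sort_toFinset]; exact hne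

/-- the candidate basis family of the m-th exterior power -/
def wB (m : ℕ) (s : {s : Finset (Fin n) // s.card = m}) : (⋀[ℝ]^m (Vn n) : Submodule ℝ _) :=
  ⟨wS s.1, by obtain ⟨s, rfl⟩ := s; exact wS_mem s⟩

lemma wB_li (m : ℕ) : LinearIndependent ℝ (wB (n := n) m) := by
  have : LinearIndependent ℝ (fun s : {s : Finset (Fin n) // s.card = m} => wS (n := n) s.1) := by
    rw [linearIndependent_iff']
    intro fs g hsum s hs
    have happ : Dl ((s : Finset (Fin n)).sort (· ≤ ·))
        (∑ t ∈ fs, g t • wS (t : Finset (Fin n))) = 0 := by rw [hsum, map_zero]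
    rw [map_sum] at happ
    simp_rw [map_smul] at happ
    rw [Finset.sum_eq_single s] at happ
    · rw [Dl_wS_self] at happ
      have h2 : algebraMap ℝ (ExteriorAlgebra ℝ (Vn n)) (g s)
          = algebraMap ℝ (ExteriorAlgebra ℝ (Vn n)) 0 := by
        rw [map_zero, Algebra.algebraMap_eq_smul_one]; exact happ
      exact (ExteriorAlgebra.algebraMap_leftInverse (Vn n)).injective h2
    · intro t _ hts
      rw [Dl_wS_ne (by rw [s.2, t.2]) (fun h => hts (Subtype.ext h.symm)), smul_zero]
    · intro hs'; exact absurd hs hs'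
  exact LinearIndependent.of_comp (Submodule.subtype _) this

def WSpan (m : ℕ) : Submodule ℝ (ExteriorAlgebra ℝ (Vn n)) :=
  Submodule.span ℝ (Set.range fun s : {s : Finset (Fin n) // s.card = m} => wS s.1)

lemma wS_mem_WSpan (s : Finset (Fin n)) : wS s ∈ WSpan (n := n) s.card :=
  Submodule.subset_span ⟨⟨s, rfl⟩, rfl⟩

lemma ι_mul_wS_mem (i : Fin n) (s : Finset (Fin n)) :
    ExteriorAlgebra.ι ℝ (sbv i) * wS s ∈ WSpan (n := n) (s.card + 1) := by
  by_cases hi : i ∈ s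
  · -- the product is zero
    obtain ⟨p, q, hpq⟩ := List.append_of_mem ((Finset.mem_sort (· ≤ ·)).2 hi)
    have hip : i ∉ p := by
      have hd := List.disjoint_of_nodup_append (hpq ▸ s.sort_nodup (· ≤ ·))
      exact fun hp => hd hp ((List.mem_cons_self (a := i) (l := q)))
    have : ExteriorAlgebra.ι ℝ (sbv i) * wS s = 0 := by
      rw [wS, hpq, wl_append, wl_cons, ← mul_assoc, ι_mul_wl_comm hip, smul_mul_assoc,
        mul_assoc, ← mul_assoc (ExteriorAlgebra.ι ℝ (sbv i)), ExteriorAlgebra.ι_sq_zero,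
        zero_mul, mul_zero, smul_zero]
    rw [this]; exact Submodule.zero_mem _
  · -- the product is ± wS (insert i s)
    have hi' : i ∈ (insert i s).sort (· ≤ ·) := (Finset.mem_sort _).2 (Finset.mem_insert_self i s)
    obtain ⟨p, q, hpq⟩ := List.append_of_mem hi'
    have hnd : ((insert i s).sort (· ≤ ·)).Nodup := Finset.sort_nodup _ _
    have hnd' := hpq ▸ hnd
    have hip : i ∉ p := fun hp =>
      (List.disjoint_of_nodup_append hnd') hp ((List.mem_cons_self (a := i) (l := q)))
    have hiq : i ∉ q := (List.nodup_cons.1 (List.nodup_append.1 hnd').2.1).1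
    have hsub : (p ++ q).Sublist (p ++ i :: q) :=
      List.Sublist.append_left (List.sublist_cons_self i q) p
    have hpq_nodup : (p ++ q).Nodup := hnd'.sublist hsub
    have hpq_sorted : List.Pairwise (· ≤ ·) (p ++ q) :=
      List.Pairwise.sublist hsub (hpq ▸ Finset.pairwise_sort _ (· ≤ ·))
    have htf : (p ++ q).toFinset = s := by
      have h1 : (p ++ (i :: q)).toFinset = insert i s := by
        rw [← hpq, Finset.sort_toFinset]
      have h2 : (p ++ (i :: q)).toFinset = insert i (p ++ q).toFinset := by
        simp [List.toFinset_append, Finset.union_comm, Finset.union_insert,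
          Finset.insert_union]
      have hips : i ∉ (p ++ q).toFinset := by
        simp only [List.toFinset_append, Finset.mem_union, List.mem_toFinset]
        tauto
      have := h2.symm.trans h1
      calc (p ++ q).toFinset = (insert i (p ++ q).toFinset).erase i := by
            rw [Finset.erase_insert hips]
        _ = (insert i s).erase i := by rw [this]
        _ = s := Finset.erase_insert hi
    have hperm : List.Perm (p ++ q) (s.sort (· ≤ ·)) :=
      List.perm_of_nodup_nodup_toFinset_eq hpq_nodup (s.sort_nodup _)
        (by rw [htf, Finset.sort_toFinset])
    have heq : p ++ q = s.sort (· ≤ ·) :=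
      hperm.eq_of_pairwise' hpq_sorted (Finset.pairwise_sort _ _)
    have hform : ExteriorAlgebra.ι ℝ (sbv i) * wS s
        = ((-1 : ℝ) ^ p.length) • wS (insert i s) := by
      rw [wS, ← heq, wl_append, ← mul_assoc, ι_mul_wl_comm hip, smul_mul_assoc, mul_assoc,
        wS, hpq, wl_append, wl_cons]
    rw [hform]
    have hcard : (insert i s).card = s.card + 1 := Finset.card_insert_of_notMem hi
    exact Submodule.smul_mem _ _ (by rw [← hcard]; exact wS_mem_WSpan _)

lemma ι_mul_WSpan {m : ℕ} (v : Vn n) {z : ExteriorAlgebra ℝ (Vn n)} (hz : z ∈ WSpan m) :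
    ExteriorAlgebra.ι ℝ v * z ∈ WSpan (n := n) (m + 1) := by
  induction hz using Submodule.span_induction with
  | mem x hx =>
    obtain ⟨⟨s, rfl⟩, rfl⟩ := hx
    have hv : ExteriorAlgebra.ι ℝ v = ∑ j, v j • ExteriorAlgebra.ι ℝ (sbv j) := by
      conv_lhs => rw [sbv_decomp v]
      rw [map_sum]
      simp_rw [map_smul]
    rw [hv, Finset.sum_mul]
    refine Submodule.sum_mem _ fun j _ => ?_
    rw [smul_mul_assoc]
    exact Submodule.smul_mem _ _ (ι_mul_wS_mem j s)
  | zero => rw [mul_zero]; exact Submodule.zero_mem _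
  | add x y _ _ hx hy => rw [mul_add]; exact Submodule.add_mem _ hx hy
  | smul c x _ hx => rw [mul_smul_comm]; exact Submodule.smul_mem _ _ hx

lemma exteriorPower_le_WSpan (m : ℕ) : ⋀[ℝ]^m (Vn n) ≤ WSpan (n := n) m := by
  induction m with
  | zero =>
    intro x hx
    rw [exteriorPower, pow_zero] at hx
    obtain ⟨r, rfl⟩ := Submodule.mem_one.1 hx
    have : algebraMap ℝ (ExteriorAlgebra ℝ (Vn n)) r = r • wS (∅ : Finset (Fin n)) := by
      rw [wS, Finset.sort_empty, wl_nil, Algebra.algebraMap_eq_smul_one]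
    rw [this]
    exact Submodule.smul_mem _ _ (by simpa using wS_mem_WSpan (∅ : Finset (Fin n)))
  | succ k ih =>
    intro x hx
    rw [exteriorPower, pow_succ'] at hx
    refine Submodule.mul_induction_on hx ?_ ?_
    · rintro a ⟨v, rfl⟩ b hb
      exact ι_mul_WSpan v (ih hb)
    · intro x y hx hy
      exact Submodule.add_mem _ hx hy

/-- basis of the m-th exterior power of ℝⁿ indexed by m-element subsets -/
def exteriorBasis (m : ℕ) :
    Module.Basis {s : Finset (Fin n) // s.card = m} ℝ (⋀[ℝ]^m (Vn n) : Submodule ℝ _) := by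
  refine Module.Basis.mk (wB_li m) ?_
  rintro ⟨x, hx⟩ -
  have h1 : x ∈ WSpan (n := n) m := exteriorPower_le_WSpan m hx
  have h2 : WSpan (n := n) m
      = Submodule.map (Submodule.subtype _) (Submodule.span ℝ (Set.range (wB m))) := by
    rw [Submodule.map_span, ← Set.range_comp]
    rfl
  rw [h2] at h1
  obtain ⟨y, hy, hyx⟩ := h1
  have : y = ⟨x, hx⟩ := Subtype.ext hyx
  rwa [this] at hy

instance (m : ℕ) : FiniteDimensional ℝ (⋀[ℝ]^m (Vn n) : Submodule ℝ _) :=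
  Module.Basis.finiteDimensional_of_finite (exteriorBasis m)

lemma finrank_exteriorPower (m : ℕ) :
    Module.finrank ℝ (⋀[ℝ]^m (Vn n) : Submodule ℝ _) = n.choose m := by
  rw [Module.finrank_eq_card_basis (exteriorBasis (n := n) m), Fintype.card_finset_len,
    Fintype.card_fin]

section TraceDev

def ER (ξ : Vn n) (m : ℕ) : (⋀[ℝ]^m (Vn n) : Submodule ℝ _) →ₗ[ℝ] (⋀[ℝ]^(m+1) (Vn n) : Submodule ℝ _) :=
  (eps ξ).restrict (eps_mem ξ m)

def IR (ξ : Vn n) (m : ℕ) : (⋀[ℝ]^(m+1) (Vn n) : Submodule ℝ _) →ₗ[ℝ] (⋀[ℝ]^m (Vn n) : Submodule ℝ _) :=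
  (iot ξ).restrict (iot_mem ξ m)

lemma KR_mem (ξ η : Vn n) (m : ℕ) :
    ∀ x ∈ ⋀[ℝ]^m (Vn n), (eps η ∘ₗ iot ξ) x ∈ ⋀[ℝ]^m (Vn n) := by
  intro x hx
  match m with
  | 0 =>
    show eps η (iot ξ x) ∈ _
    rw [iot_zero_mem ξ x hx, map_zero]
    exact Submodule.zero_mem _
  | k+1 =>
    exact eps_mem η k _ (iot_mem ξ k x hx)

/-- `ε(η)ι(ξ)` restricted to `m`-forms. -/
def KR (ξ η : Vn n) (m : ℕ) : (⋀[ℝ]^m (Vn n) : Submodule ℝ _) →ₗ[ℝ] (⋀[ℝ]^m (Vn n) : Submodule ℝ _) :=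
  (eps η ∘ₗ iot ξ).restrict (KR_mem ξ η m)

lemma anticomm (ξ η : Vn n) (x : ExteriorAlgebra ℝ (Vn n)) :
    iot ξ (eps η x) = ⟪ξ, η⟫ • x - eps η (iot ξ x) := by
  have h := CliffordAlgebra.contractLeft_ι_mul (Q := (0 : QuadraticForm ℝ (Vn n)))
    (d := (innerSL ℝ ξ).toLinearMap) η x
  simpa [eps, iot] using h

lemma J_eq (ξ η : Vn n) (m : ℕ) :
    IR ξ m ∘ₗ ER η m = ⟪ξ, η⟫ • LinearMap.id - KR ξ η m := by
  refine LinearMap.ext fun x => Subtype.ext ?_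
  show iot ξ (eps η x.1) = _
  rw [anticomm]
  rfl

lemma KR_succ (ξ η : Vn n) (m : ℕ) : KR ξ η (m+1) = ER η m ∘ₗ IR ξ m := rfl

lemma KR_zero (ξ η : Vn n) : KR ξ η 0 = 0 := by
  refine LinearMap.ext fun x => Subtype.ext ?_
  show eps η (iot ξ x.1) = 0
  rw [iot_zero_mem ξ x.1 x.2, map_zero]

instance instFreeExt (m : ℕ) : Module.Free ℝ (⋀[ℝ]^m (Vn n) : Submodule ℝ _) :=
  Module.Free.of_basis (exteriorBasis m)

/-- The alternating sum `A_{n,m}`. -/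
def An (n m : ℕ) : ℝ := ∑ j ∈ Finset.range (m + 1), (-1 : ℝ) ^ j * (n.choose (m - j))

lemma An_zero : An n 0 = 1 := by simp [An]

lemma An_succ (m : ℕ) : An n (m + 1) = (n.choose (m + 1) : ℝ) - An n m := by
  rw [An, Finset.sum_range_succ']
  simp only [pow_succ, Nat.succ_sub_succ, pow_zero, one_mul, Nat.sub_zero]
  rw [An]
  have h : ∑ j ∈ Finset.range (m + 1), (-1 : ℝ) ^ j * -1 * (n.choose (m - j))
      = -∑ j ∈ Finset.range (m + 1), (-1 : ℝ) ^ j * (n.choose (m - j)) := by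
    rw [← Finset.sum_neg_distrib]
    exact Finset.sum_congr rfl fun j _ => by ring
  rw [h]
  ring

lemma trace_id_ext (m : ℕ) :
    LinearMap.trace ℝ (⋀[ℝ]^m (Vn n) : Submodule ℝ _) LinearMap.id = (n.choose m : ℝ) := by
  rw [LinearMap.trace_id, finrank_exteriorPower]

lemma traceE_sub (m : ℕ)
    (f g : (⋀[ℝ]^m (Vn n) : Submodule ℝ _) →ₗ[ℝ] (⋀[ℝ]^m (Vn n) : Submodule ℝ _)) :
    LinearMap.trace ℝ _ (f - g) = LinearMap.trace ℝ _ f - LinearMap.trace ℝ _ g :=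
  map_sub _ f g

lemma traceE_add (m : ℕ)
    (f g : (⋀[ℝ]^m (Vn n) : Submodule ℝ _) →ₗ[ℝ] (⋀[ℝ]^m (Vn n) : Submodule ℝ _)) :
    LinearMap.trace ℝ _ (f + g) = LinearMap.trace ℝ _ f + LinearMap.trace ℝ _ g :=
  map_add _ f g

lemma traceE_smul (m : ℕ) (c : ℝ)
    (f : (⋀[ℝ]^m (Vn n) : Submodule ℝ _) →ₗ[ℝ] (⋀[ℝ]^m (Vn n) : Submodule ℝ _)) :
    LinearMap.trace ℝ _ (c • f) = c * LinearMap.trace ℝ _ f := by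
  rw [map_smul]; rfl

lemma trace_J (ξ η : Vn n) (m : ℕ) :
    LinearMap.trace ℝ (⋀[ℝ]^m (Vn n) : Submodule ℝ _) (IR ξ m ∘ₗ ER η m) = ⟪ξ, η⟫ * An n m := by
  induction m with
  | zero =>
    rw [J_eq, traceE_sub, traceE_smul, KR_zero, map_zero, trace_id_ext, An_zero]
    simp
  | succ k ih =>
    rw [J_eq, traceE_sub, traceE_smul, trace_id_ext, KR_succ,
      LinearMap.trace_comp_comm', ih, An_succ]
    ring

lemma trace_K (ξ η : Vn n) (m : ℕ) :
    LinearMap.trace ℝ (⋀[ℝ]^m (Vn n) : Submodule ℝ _) (KR ξ η m)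
      = ⟪ξ, η⟫ * ((n.choose m : ℝ) - An n m) := by
  match m with
  | 0 => rw [KR_zero, map_zero, An_zero]; simp
  | k+1 =>
    rw [KR_succ, LinearMap.trace_comp_comm', trace_J, An_succ]
    ring

end TraceDev

set_option maxHeartbeats 1600000 in
/-- the recursion
`a_{m+1}(η₁,ξ₂,ξ₁,η₂) = a_m(ξ₁,ξ₂,η₁,η₂) + ⟨ξ₁,ξ₂⟩⟨η₁,η₂⟩(2A_{n,m} − C(n,m))`
for `a_m(ξ₁,ξ₂,η₁,η₂) = tr(ε(ξ₁)ι(ξ₂)ε(η₁)ι(η₂))` on `Λᵐ`. -/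
theorem statement9 {n : ℕ} (m : ℕ) (ξ₁ ξ₂ η₁ η₂ : Vn n) :
    LinearMap.trace ℝ (⋀[ℝ]^(m + 1) (Vn n)) (quadR η₁ ξ₂ ξ₁ η₂ (m + 1))
      = LinearMap.trace ℝ (⋀[ℝ]^m (Vn n)) (quadR ξ₁ ξ₂ η₁ η₂ m)
        + ⟪ξ₁, ξ₂⟫ * ⟪η₁, η₂⟫ *
            (2 * (∑ j ∈ Finset.range (m + 1), (-1 : ℝ) ^ j * (n.choose (m - j)))
              - (n.choose m : ℝ)) := by
  have hdecomp : quadR η₁ ξ₂ ξ₁ η₂ (m+1)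
      = ER η₁ m ∘ₗ ((IR ξ₂ m ∘ₗ ER ξ₁ m) ∘ₗ IR η₂ m) := rfl
  have hquad : (KR ξ₂ ξ₁ m) ∘ₗ (KR η₂ η₁ m) = quadR ξ₁ ξ₂ η₁ η₂ m := rfl
  have hsum : (∑ j ∈ Finset.range (m + 1), (-1 : ℝ) ^ j * (n.choose (m - j))) = An n m := rfl
  rw [hdecomp, LinearMap.trace_comp_comm', hsum]
  have hcomp : ((IR ξ₂ m ∘ₗ ER ξ₁ m) ∘ₗ IR η₂ m) ∘ₗ ER η₁ m
      = (IR ξ₂ m ∘ₗ ER ξ₁ m) ∘ₗ (IR η₂ m ∘ₗ ER η₁ m) := by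
    rw [LinearMap.comp_assoc]
  rw [hcomp, J_eq ξ₂ ξ₁ m, J_eq η₂ η₁ m]
  have hexp : (⟪ξ₂, ξ₁⟫ • LinearMap.id - KR ξ₂ ξ₁ m) ∘ₗ (⟪η₂, η₁⟫ • LinearMap.id - KR η₂ η₁ m)
      = (⟪ξ₂, ξ₁⟫ * ⟪η₂, η₁⟫) • (LinearMap.id : (⋀[ℝ]^m (Vn n) : Submodule ℝ _) →ₗ[ℝ] _)
        - ⟪ξ₂, ξ₁⟫ • KR η₂ η₁ m - ⟪η₂, η₁⟫ • KR ξ₂ ξ₁ m + KR ξ₂ ξ₁ m ∘ₗ KR η₂ η₁ m := by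
    refine LinearMap.ext fun x => ?_
    simp only [LinearMap.sub_comp, LinearMap.comp_sub, LinearMap.smul_comp,
      LinearMap.comp_smul, LinearMap.id_comp, LinearMap.comp_id, LinearMap.sub_apply,
      LinearMap.add_apply, LinearMap.smul_apply, LinearMap.id_apply, smul_smul,
      smul_sub, smul_add, sub_smul, neg_smul, one_smul]
    module
  rw [hexp, hquad, traceE_add, traceE_sub, traceE_sub, traceE_smul, traceE_smul,
    traceE_smul, trace_id_ext, trace_K, trace_K]
  rw [real_inner_comm ξ₂ ξ₁, real_inner_comm η₂ η₁]
  ring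
end
end
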